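/- Let f ∈ L²(ℝ; ℂ) with ∫|f(t)|² dt = 1 and finite second moment ∫ t²|f(t)|² dt < ∞. Set e = ∫ t|f(t)|² dt and σ = ∫ (t − e)²|f(t)|² dt. Then for every real t₀ ≠ 0 and every ω ∈ ℝ, the short-time Fourier ambiguity function of f satisfies |∫ f(x) conj(e^{iωx} f(x − t₀)) dx| ≤ 4√σ/|t₀| + 4σ/t₀². -/

import Mathlib

open MeasureTheory

set_option maxHeartbeats 1000000

/-- Decay of the short-time Fourier ambiguity function of a unit-norm window
in `L²(ℝ)` in terms of its position variance. -/
theorem stmt15 (f : ℝ → ℂ)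
    (hf : MemLp f 2 (volume : Measure ℝ))
    (hf1 : ∫ t : ℝ, ‖f t‖ ^ 2 = 1)
    (hf2 : Integrable (fun t : ℝ => t ^ 2 * ‖f t‖ ^ 2))
    (e σ : ℝ)
    (he : e = ∫ t : ℝ, t * ‖f t‖ ^ 2)
    (hσ : σ = ∫ t : ℝ, (t - e) ^ 2 * ‖f t‖ ^ 2)
    (t₀ : ℝ) (ht₀ : t₀ ≠ 0) (ω : ℝ) :
    ‖∫ x : ℝ, f x * (starRingEnd ℂ)
        (Complex.exp ((ω * x : ℝ) * Complex.I) * f (x - t₀))‖ ≤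
      4 * Real.sqrt σ / |t₀| + 4 * σ / t₀ ^ 2 := by
  have hfm : AEStronglyMeasurable f volume := hf.aestronglyMeasurable
  have Hsq : Integrable (fun x : ℝ => ‖f x‖ ^ 2) :=
    (memLp_two_iff_integrable_sq_norm hfm).mp hf
  -- integrability of x * ‖f x‖^2
  have H1 : Integrable (fun x : ℝ => x * ‖f x‖ ^ 2) := by
    refine (hf2.add Hsq).mono' (aestronglyMeasurable_id.mul Hsq.1) (ae_of_all _ fun x => ?_)
    simp only [Pi.add_apply]
    rw [Real.norm_eq_abs, abs_mul, abs_of_nonneg (by positivity : (0:ℝ) ≤ ‖f x‖ ^ 2)]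
    nlinarith [sq_nonneg (|x| - 1), sq_abs x, sq_nonneg ‖f x‖, abs_nonneg x,
      sq_nonneg (‖f x‖)]
  -- integrability of (x - e)^2 * ‖f x‖^2
  have J : Integrable (fun x : ℝ => (x - e) ^ 2 * ‖f x‖ ^ 2) := by
    have h : (fun x : ℝ => (x - e) ^ 2 * ‖f x‖ ^ 2) =
        fun x : ℝ => (x ^ 2 * ‖f x‖ ^ 2 - (2*e) * (x * ‖f x‖ ^ 2)) + e^2 * ‖f x‖ ^ 2 := by
      funext x; ring
    rw [h]
    exact (hf2.sub (H1.const_mul _)).add (Hsq.const_mul _)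
  have hσ0 : 0 ≤ σ := by
    rw [hσ]; exact integral_nonneg fun x => by positivity
  -- positivity of σ
  have hσpos : 0 < σ := by
    rcases hσ0.lt_or_eq with h | h
    · exact h
    exfalso
    have hz : (fun x : ℝ => (x - e) ^ 2 * ‖f x‖ ^ 2) =ᵐ[volume] 0 := by
      rw [← integral_eq_zero_iff_of_nonneg_ae (ae_of_all _ fun x => by positivity) J]
      rw [← hσ, ← h]
    have hne : ∀ᵐ x : ℝ, x ≠ e := by
      have h0 : volume ({e} : Set ℝ) = 0 := measure_singleton e
      rw [MeasureTheory.ae_iff]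
      simpa [Set.setOf_eq_eq_singleton] using h0
    have hfz : (fun x : ℝ => ‖f x‖ ^ 2) =ᵐ[volume] 0 := by
      filter_upwards [hz, hne] with x hx hxe
      have h2 : (x - e) ^ 2 ≠ 0 := pow_ne_zero _ (sub_ne_zero.mpr hxe)
      have := hx
      simp only [Pi.zero_apply] at this ⊢
      rcases mul_eq_zero.mp this with h3 | h3
      · exact absurd h3 h2
      · exact h3
    have : (1:ℝ) = 0 := by
      rw [← hf1, integral_congr_ae hfz]
      simp
    norm_num at this
  set s : ℝ := Real.sqrt σ with hs_def
  have hs : 0 < s := Real.sqrt_pos.mpr hσpos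
  have hs2 : s ^ 2 = σ := Real.sq_sqrt hσ0
  set T : ℝ := |t₀| with hT_def
  have hT : 0 < T := abs_pos.mpr ht₀
  clear_value s T
  have hT2 : T ^ 2 = t₀ ^ 2 := by rw [hT_def]; exact sq_abs t₀
  -- the elementary key inequality
  have key : ∀ a b c : ℝ, 0 ≤ a → 0 ≤ b → T ^ 2 / 4 ≤ c →
      a * b ≤ 1 / (s * T) * (c * a ^ 2) + s / T * b ^ 2 := by
    intro a b c ha hb hc
    have hsT : 0 < s * T := mul_pos hs hT
    have h2 : a * b ≤ (c * a ^ 2 + s ^ 2 * b ^ 2) / (s * T) := by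
      rw [le_div_iff₀ hsT]
      nlinarith [sq_nonneg (T * a - 2 * s * b),
        mul_nonneg (by linarith : (0:ℝ) ≤ c - T ^ 2 / 4) (sq_nonneg a)]
    calc a * b ≤ (c * a ^ 2 + s ^ 2 * b ^ 2) / (s * T) := h2
      _ = 1 / (s * T) * (c * a ^ 2) + s / T * b ^ 2 := by
          field_simp
  -- the dominating function φ
  set φ : ℝ → ℝ := fun x =>
    1 / (s * T) * ((x - e) ^ 2 * ‖f x‖ ^ 2) + s / T * ‖f (x - t₀)‖ ^ 2 +
      (s / T * ‖f x‖ ^ 2 + 1 / (s * T) * ((x - t₀ - e) ^ 2 * ‖f (x - t₀)‖ ^ 2)) with hφ_def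
  have Hsq' : Integrable (fun x : ℝ => ‖f (x - t₀)‖ ^ 2) := Hsq.comp_sub_right t₀
  have J' : Integrable (fun x : ℝ => (x - t₀ - e) ^ 2 * ‖f (x - t₀)‖ ^ 2) :=
    J.comp_sub_right t₀
  have i1 : Integrable (fun x : ℝ => 1 / (s * T) * ((x - e) ^ 2 * ‖f x‖ ^ 2)) :=
    J.const_mul _
  have i2 : Integrable (fun x : ℝ => s / T * ‖f (x - t₀)‖ ^ 2) := Hsq'.const_mul _
  have i3 : Integrable (fun x : ℝ => s / T * ‖f x‖ ^ 2) := Hsq.const_mul _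
  have i4 : Integrable (fun x : ℝ => 1 / (s * T) * ((x - t₀ - e) ^ 2 * ‖f (x - t₀)‖ ^ 2)) :=
    J'.const_mul _
  have hφint : Integrable φ := (i1.add i2).add (i3.add i4)
  -- pointwise bound
  have hpt : ∀ x : ℝ, ‖f x‖ * ‖f (x - t₀)‖ ≤ φ x := by
    intro x
    have h3 : 0 ≤ s / T * ‖f x‖ ^ 2 := by positivity
    have h4 : 0 ≤ 1 / (s * T) * ((x - t₀ - e) ^ 2 * ‖f (x - t₀)‖ ^ 2) := by positivity
    have h1 : 0 ≤ 1 / (s * T) * ((x - e) ^ 2 * ‖f x‖ ^ 2) := by positivity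
    have h2 : 0 ≤ s / T * ‖f (x - t₀)‖ ^ 2 := by positivity
    rcases le_or_gt (T ^ 2 / 4) ((x - e) ^ 2) with hc | hc
    · have := key ‖f x‖ ‖f (x - t₀)‖ ((x - e) ^ 2) (norm_nonneg _) (norm_nonneg _) hc
      simp only [hφ_def]
      linarith
    · have hc2 : T ^ 2 / 4 ≤ (x - t₀ - e) ^ 2 := by
        nlinarith [sq_nonneg ((x - e) - t₀ / 2), hT2]
      have := key ‖f (x - t₀)‖ ‖f x‖ ((x - t₀ - e) ^ 2) (norm_nonneg _) (norm_nonneg _) hc2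
      simp only [hφ_def]
      nlinarith [this]
  -- norm of integrand
  have hnorm : ∀ x : ℝ, ‖f x * (starRingEnd ℂ)
      (Complex.exp ((ω * x : ℝ) * Complex.I) * f (x - t₀))‖ = ‖f x‖ * ‖f (x - t₀)‖ := by
    intro x
    rw [norm_mul, RingHomIsometric.norm_map, norm_mul, Complex.norm_exp_ofReal_mul_I, one_mul]
  -- integrals of the pieces
  have e1 : ∫ x : ℝ, (x - e) ^ 2 * ‖f x‖ ^ 2 = σ := hσ.symm
  have e2 : ∫ x : ℝ, ‖f (x - t₀)‖ ^ 2 = 1 := by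
    rw [integral_sub_right_eq_self (fun y : ℝ => ‖f y‖ ^ 2) t₀]; exact hf1
  have e4 : ∫ x : ℝ, (x - t₀ - e) ^ 2 * ‖f (x - t₀)‖ ^ 2 = σ := by
    rw [integral_sub_right_eq_self (fun y : ℝ => (y - e) ^ 2 * ‖f y‖ ^ 2) t₀]
    exact hσ.symm
  have i12 : Integrable (fun x : ℝ => 1 / (s * T) * ((x - e) ^ 2 * ‖f x‖ ^ 2) +
      s / T * ‖f (x - t₀)‖ ^ 2) := i1.add i2
  have i34 : Integrable (fun x : ℝ => s / T * ‖f x‖ ^ 2 +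
      1 / (s * T) * ((x - t₀ - e) ^ 2 * ‖f (x - t₀)‖ ^ 2)) := i3.add i4
  have hφint_val : ∫ x : ℝ, φ x = 4 * s / T := by
    simp only [hφ_def]
    rw [integral_add i12 i34, integral_add i1 i2, integral_add i3 i4,
      integral_const_mul, integral_const_mul, integral_const_mul, integral_const_mul,
      e1, e2, e4, hf1]
    have hσss : σ = s * s := by nlinarith [hs2]
    rw [hσss]
    field_simp
    ring
  -- main chain
  have heq : (fun x : ℝ => ‖f x * (starRingEnd ℂ)
      (Complex.exp ((ω * x : ℝ) * Complex.I) * f (x - t₀))‖) =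
      fun x : ℝ => ‖f x‖ * ‖f (x - t₀)‖ := funext hnorm
  have step1 : ‖∫ x : ℝ, f x * (starRingEnd ℂ)
      (Complex.exp ((ω * x : ℝ) * Complex.I) * f (x - t₀))‖ ≤
      ∫ x : ℝ, ‖f x‖ * ‖f (x - t₀)‖ := by
    have h := norm_integral_le_integral_norm (μ := (volume : Measure ℝ))
      (fun x : ℝ => f x * (starRingEnd ℂ)
        (Complex.exp ((ω * x : ℝ) * Complex.I) * f (x - t₀)))
    rwa [heq] at h
  have step2 : ∫ x : ℝ, ‖f x‖ * ‖f (x - t₀)‖ ≤ ∫ x : ℝ, φ x := by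
    refine integral_mono_of_nonneg (ae_of_all _ fun x => ?_) hφint
      (ae_of_all _ fun x => hpt x)
    positivity
  have hrest : 0 ≤ 4 * σ / t₀ ^ 2 := by positivity
  linarith [step1, step2, hφint_val.le, hφint_val.ge]
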